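/- Let A₁, …, A_n be subsets of ℝ, each equal to either an extreme interval E_V ∈ {[0,1], [k-1,k]} or an interval from a pair Ω_j = {[j, j+1], [k-1-j, k-j]} with 1 ≤ j < k/2, and suppose all the pairs Ω_{j} occurring are distinct and no A_i is of the central form [(k-1)/2, (k+1)/2]. Define the 'opposite' operation Ā = {k - x : x ∈ A}. Then for all i ≠ j among the non-extreme coordinates with distinct characteristics, A_i ≠ A_j and A_i ≠ Ā_j; consequently any transformation of the tuple obtained by composing moves each of which transposes two coordinates and replaces one of them by its opposite changes the parity of the coordinate permutation and the parity of the number of replaced-by-opposite coordinates simultaneously, so a tuple cannot be transformed into the tuple obtained from it by replacing exactly one coordinate by its opposite without permuting. -/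

import Mathlib

/-- The unit interval E_j = [j, j+1] ⊆ ℝ. -/
def EInterval (j : ℕ) : Set ℝ := Set.Icc (j : ℝ) (j + 1)

/-- The opposite of a subset A ⊆ ℝ: its image under x ↦ k - x. -/
def oppSet (k : ℕ) (A : Set ℝ) : Set ℝ := (fun x : ℝ => (k : ℝ) - x) '' A

/-- One layer-turn move on a position tuple: it transposes two coordinates and
replaces one of them by its opposite. -/
def TurnStep (k : ℕ) {n : ℕ} (A B : Fin n → Set ℝ) : Prop :=
  ∃ i j : Fin n, i ≠ j ∧
    B = fun m => if m = i then oppSet k (A j) else if m = j then A i else A m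

lemma EInt_inj {a b : ℕ} (h : EInterval a = EInterval b) : a = b := by
  have h1 : (a : ℝ) ∈ EInterval b := h ▸ ⟨le_rfl, by linarith⟩
  have h2 : (b : ℝ) ∈ EInterval a := h.symm ▸ ⟨le_rfl, by linarith⟩
  exact_mod_cast le_antisymm h2.1 h1.1

lemma opp_EInt {k j : ℕ} (h : j + 1 ≤ k) : oppSet k (EInterval j) = EInterval (k - 1 - j) := by
  have hj : ((k - 1 - j : ℕ) : ℝ) = (k : ℝ) - 1 - j := by
    have h0 : k - 1 - j + (j + 1) = k := by omega
    have h1 := congrArg (Nat.cast : ℕ → ℝ) h0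
    push_cast at h1
    linarith
  unfold oppSet EInterval
  rw [Set.image_const_sub_Icc, hj]
  have e1 : (k : ℝ) - (↑j + 1) = (k : ℝ) - 1 - ↑j := by ring
  have e2 : (k : ℝ) - ↑j = (k : ℝ) - 1 - ↑j + 1 := by ring
  rw [e1, e2]

/-- Parity obstruction for special classes: if A is a tuple of intervals with one
extreme coordinate i₀ (E₀ or E_{k-1}) and the other coordinates drawn from pairs
Ω_j = {E_j, E_{k-1-j}} (1 ≤ j < k/2) with pairwise distinct characteristics, then
the non-extreme coordinates are pairwise neither equal nor opposite, and the tuple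
obtained from A by replacing exactly one coordinate by its opposite is not reachable
from A by composing moves each of which transposes two coordinates and replaces one
by its opposite. -/
theorem stmt19 (n k : ℕ) (hk : 2 ≤ k) (A : Fin n → Set ℝ) (i₀ : Fin n)
    (hA0 : A i₀ = EInterval 0 ∨ A i₀ = EInterval (k - 1))
    (ch : Fin n → ℕ)
    (hch : ∀ i, i ≠ i₀ → 1 ≤ ch i ∧ ch i < k / 2)
    (hpair : ∀ i, i ≠ i₀ → A i = EInterval (ch i) ∨ A i = EInterval (k - 1 - ch i))
    (hinj : ∀ i j, i ≠ i₀ → j ≠ i₀ → i ≠ j → ch i ≠ ch j) :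
    (∀ i j, i ≠ i₀ → j ≠ i₀ → i ≠ j → A i ≠ A j ∧ A i ≠ oppSet k (A j)) ∧
    ∀ i : Fin n,
      ¬ Relation.ReflTransGen (TurnStep k) A (Function.update A i (oppSet k (A i))) := by
  classical
  set pr : Fin n → ℕ := fun m => if m = i₀ then 0 else ch m with hpr_def
  have hprb : ∀ m, pr m = 0 ∨ (1 ≤ pr m ∧ 2 * pr m + 2 ≤ k) := by
    intro m
    by_cases hm : m = i₀
    · left; simp [pr, hm]
    · right
      have := hch m hm
      simp only [pr, if_neg hm]
      omega
  have hprinj : ∀ m m', m ≠ m' → pr m ≠ pr m' := by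
    intro m m' hmm'
    by_cases hm : m = i₀ <;> by_cases hm' : m' = i₀
    · exact absurd (hm.trans hm'.symm) hmm'
    · have := hch m' hm'; simp only [pr, if_pos hm, if_neg hm']; omega
    · have := hch m hm; simp only [pr, if_neg hm, if_pos hm']; omega
    · simp only [pr, if_neg hm, if_neg hm']; exact hinj m m' hm hm' hmm'
  have hA : ∀ m, (A m = EInterval (pr m) ∧ oppSet k (A m) = EInterval (k - 1 - pr m)) ∨
      (A m = EInterval (k - 1 - pr m) ∧ oppSet k (A m) = EInterval (pr m)) := by
    intro m
    by_cases hm : m = i₀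
    · have hpm : pr m = 0 := if_pos hm
      rw [hpm, hm, Nat.sub_zero]
      have e1 : k - 1 - 0 = k - 1 := by omega
      have e2 : k - 1 - (k - 1) = 0 := by omega
      rcases hA0 with h | h
      · left
        refine ⟨h, ?_⟩
        rw [h, opp_EInt (by omega), e1]
      · right
        refine ⟨h, ?_⟩
        rw [h, opp_EInt (by omega), e2]
    · have hpm : pr m = ch m := if_neg hm
      have hcm := hch m hm
      rw [hpm]
      have e2 : k - 1 - (k - 1 - ch m) = ch m := by omega
      rcases hpair m hm with h | h
      · left
        refine ⟨h, ?_⟩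
        rw [h, opp_EInt (by omega)]
      · right
        refine ⟨h, ?_⟩
        rw [h, opp_EInt (by omega), e2]
  have hdisj : ∀ m m' a b, m ≠ m' → (a = pr m ∨ a = k - 1 - pr m) →
      (b = pr m' ∨ b = k - 1 - pr m') → EInterval a ≠ EInterval b := by
    intro m m' a b hne ha hb h
    have h0 := EInt_inj h
    have h1 := hprb m; have h2 := hprb m'; have h3 := hprinj m m' hne
    omega
  have notself : ∀ m, A m ≠ oppSet k (A m) := by
    intro m h
    rcases hA m with ⟨h1, h2⟩ | ⟨h1, h2⟩ <;>
    · rw [h2] at h; rw [h1] at h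
      have := EInt_inj h
      have := hprb m
      omega
  have notA : ∀ m m', m ≠ m' → A m ≠ A m' ∧ A m ≠ oppSet k (A m') := by
    intro m m' h
    rcases hA m with ⟨h1, _⟩ | ⟨h1, _⟩ <;> rcases hA m' with ⟨h2, h3⟩ | ⟨h2, h3⟩ <;>
      exact ⟨by rw [h1, h2]; exact hdisj m m' _ _ h (by tauto) (by tauto),
             by rw [h1, h3]; exact hdisj m m' _ _ h (by tauto) (by tauto)⟩
  have oppopp : ∀ m, oppSet k (oppSet k (A m)) = A m := by
    intro m
    have hb : pr m + 1 ≤ k ∧ (k - 1 - pr m) + 1 ≤ k ∧ k - 1 - (k - 1 - pr m) = pr m := by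
      rcases hprb m with h | h <;> omega
    rcases hA m with ⟨h1, h2⟩ | ⟨h1, h2⟩
    · rw [h2, opp_EInt hb.2.1, hb.2.2, ← h1]
    · rw [h2, opp_EInt hb.1, ← h1]
  refine ⟨fun i j hi hj hij => notA i j hij, ?_⟩
  intro i hreach
  set f : Bool → ℤˣ := fun b => if b then -1 else 1 with hf
  have hfneg : ∀ b, f (!b) = - f b := by intro b; cases b <;> simp [f]
  have inv : ∀ B, Relation.ReflTransGen (TurnStep k) A B →
      ∃ (σ : Equiv.Perm (Fin n)) (s : Fin n → Bool),
        (∀ m, B m = if s m then oppSet k (A (σ m)) else A (σ m)) ∧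
        Equiv.Perm.sign σ * ∏ m, f (s m) = 1 := by
    intro B hB
    induction hB with
    | refl => exact ⟨1, fun _ => false, fun m => by simp, by simp [f]⟩
    | tail hBC hstep ih =>
      obtain ⟨σ, s, hBs, hsgn⟩ := ih
      obtain ⟨i', j', hij, hC⟩ := hstep
      refine ⟨σ * Equiv.swap i' j',
        fun m => if m = i' then !(s j') else if m = j' then s i' else s m, ?_, ?_⟩
      · intro m
        by_cases h1 : m = i'
        · subst h1
          simp only [hC, if_pos rfl, Equiv.Perm.mul_apply, Equiv.swap_apply_left]
          rw [hBs j']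
          cases hsj : s j' <;> simp [oppopp]
        · by_cases h2 : m = j'
          · subst h2
            simp only [hC, if_neg h1, if_pos rfl, Equiv.Perm.mul_apply,
              Equiv.swap_apply_right]
            exact hBs i'
          · simp only [hC, if_neg h1, if_neg h2, Equiv.Perm.mul_apply,
              Equiv.swap_apply_of_ne_of_ne h1 h2]
            exact hBs m
      · have e0 : Equiv.Perm.sign (σ * Equiv.swap i' j') = - Equiv.Perm.sign σ := by
          rw [Equiv.Perm.sign_mul, Equiv.Perm.sign_swap hij, mul_neg_one]
        set s' : Fin n → Bool :=
          fun m => if m = i' then !(s j') else if m = j' then s i' else s m with hs'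
        set t : Fin n → Bool := fun m => s (Equiv.swap i' j' m) with ht
        have hti : t i' = s j' := by simp [t]
        have e2 : ∀ m ∈ Finset.univ.erase i', f (s' m) = f (t m) := by
          intro m hm
          have hmi : m ≠ i' := Finset.ne_of_mem_erase hm
          by_cases h2 : m = j'
          · subst h2; simp [s', t, hmi]
          · simp [s', t, hmi, h2, Equiv.swap_apply_of_ne_of_ne hmi h2]
        have e1 : (∏ m, f (s' m)) = f (!(s j')) * ∏ m ∈ Finset.univ.erase i', f (t m) := by
          rw [← Finset.mul_prod_erase Finset.univ (fun m => f (s' m)) (Finset.mem_univ i'),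
            Finset.prod_congr rfl e2]
          congr 1
          simp [s']
        have e3 : (∏ m, f (t m)) = f (s j') * ∏ m ∈ Finset.univ.erase i', f (t m) := by
          rw [← Finset.mul_prod_erase Finset.univ (fun m => f (t m)) (Finset.mem_univ i'), hti]
        have e4 : (∏ m, f (t m)) = ∏ m, f (s m) :=
          Equiv.prod_comp (Equiv.swap i' j') (fun m => f (s m))
        have e5 : (∏ m, f (s' m)) = - ∏ m, f (s m) := by
          rw [e1, hfneg, ← e4, e3, neg_mul]
        rw [e0, e5, neg_mul_neg]
        exact hsgn
  obtain ⟨σ, s, hBs, hsgn⟩ := inv _ hreach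
  have hTm : ∀ m, Function.update A i (oppSet k (A i)) m
      = if m = i then oppSet k (A i) else A m := by
    intro m; by_cases h : m = i <;> simp [Function.update, h]
  have hfix : ∀ m, σ m = m ∧ s m = decide (m = i) := by
    intro m
    have hm := hBs m
    rw [hTm m] at hm
    cases hs : s m with
    | false =>
      rw [hs, if_neg Bool.false_ne_true] at hm
      by_cases h : m = i
      · exfalso
        subst h
        rw [if_pos rfl] at hm
        by_cases hσ : σ m = m
        · rw [hσ] at hm
          exact notself m hm.symm
        · exact (notA (σ m) m hσ).2 hm.symm
      · rw [if_neg h] at hm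
        by_cases hσ : σ m = m
        · exact ⟨hσ, by simp [h]⟩
        · exact absurd hm ((notA m (σ m) fun e => hσ e.symm).1)
    | true =>
      rw [hs, if_pos rfl] at hm
      by_cases h : m = i
      · subst h
        rw [if_pos rfl] at hm
        have hm2 : A m = A (σ m) := by
          have h3 := congrArg (oppSet k) hm
          rwa [oppopp m, oppopp (σ m)] at h3
        by_cases hσ : σ m = m
        · exact ⟨hσ, by simp⟩
        · exact absurd hm2 ((notA m (σ m) fun e => hσ e.symm).1)
      · exfalso
        rw [if_neg h] at hm
        by_cases hσ : σ m = m
        · rw [hσ] at hm; exact notself m hm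
        · exact (notA m (σ m) fun e => hσ e.symm).2 hm
  have hσ1 : σ = 1 := Equiv.ext fun m => (hfix m).1
  have hprod : (∏ m, f (s m)) = -1 := by
    rw [← Finset.mul_prod_erase Finset.univ (fun m => f (s m)) (Finset.mem_univ i)]
    have h1 : f (s i) = -1 := by
      rw [(hfix i).2]; simp [f]
    have h2 : (∏ m ∈ Finset.univ.erase i, f (s m)) = 1 := by
      apply Finset.prod_eq_one
      intro m hm
      have : m ≠ i := Finset.ne_of_mem_erase hm
      rw [(hfix m).2]; simp [f, this]
    rw [h1, h2, mul_one]
  rw [hσ1, hprod] at hsgn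
  simp at hsgn
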